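/- Let G be a locally compact group and N a closed normal subgroup. For every n ∈ N, the modular function of G restricted to N equals the modular function of N: Δ_G(n) = Δ_N(n). -/

import Mathlib

open MeasureTheory Topology TopologicalSpace
open scoped ENNReal NNReal Pointwise

namespace ModularRestrictAux

section Fiber

variable {G : Type*} [Group G] [TopologicalSpace G] [IsTopologicalGroup G]
  (N : Subgroup G) [MeasurableSpace ↥N] [BorelSpace ↥N] (μN' : Measure ↥N)

/-- The fiberwise mass of `S` over the coset of `x`. -/
noncomputable def psic (S : Set G) (x : G) : ℝ≥0∞ :=
  μN' ((fun n : ↥N => x * (n : G)) ⁻¹' S)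

lemma psic_mul [μN'.IsMulLeftInvariant] (S : Set G) (x : G) (m : ↥N) :
    psic N μN' S (x * (m : G)) = psic N μN' S x := by
  unfold psic
  have hset : (fun n : ↥N => (x * (m : G)) * (n : G)) ⁻¹' S
      = (fun n : ↥N => m * n) ⁻¹' ((fun n : ↥N => x * (n : G)) ⁻¹' S) := by
    ext n
    simp only [Set.mem_preimage, Subgroup.coe_mul, mul_assoc]
  rw [hset, measure_preimage_mul]

/-- `psic` descends to the quotient. -/
noncomputable def psi [μN'.IsMulLeftInvariant] (S : Set G) : G ⧸ N → ℝ≥0∞ :=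
  Quotient.lift (psic N μN' S) (by
    intro a b hab
    have h' : a⁻¹ * b ∈ N := QuotientGroup.leftRel_apply.1 hab
    have hb : b = a * ((⟨a⁻¹ * b, h'⟩ : ↥N) : G) := by simp
    rw [hb, psic_mul])

variable [μN'.IsMulLeftInvariant]

lemma psi_mk (S : Set G) (x : G) :
    psi N μN' S (QuotientGroup.mk x) = psic N μN' S x := rfl

lemma psi_mono {S T : Set G} (h : S ⊆ T) (q : G ⧸ N) :
    psi N μN' S q ≤ psi N μN' T q := by
  refine QuotientGroup.induction_on q fun x => ?_
  rw [psi_mk, psi_mk]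
  exact measure_mono (Set.preimage_mono h)

lemma psi_union_le (S T : Set G) (q : G ⧸ N) :
    psi N μN' (S ∪ T) q ≤ psi N μN' S q + psi N μN' T q := by
  refine QuotientGroup.induction_on q fun x => ?_
  simp only [psi_mk, psic, Set.preimage_union]
  exact measure_union_le _ _

lemma psi_union_disjoint {S T : Set G} (hST : Disjoint S T) (hT : IsClosed T) (q : G ⧸ N) :
    psi N μN' (S ∪ T) q = psi N μN' S q + psi N μN' T q := by
  refine QuotientGroup.induction_on q fun x => ?_
  simp only [psi_mk, psic, Set.preimage_union]
  refine measure_union (hST.preimage _) ?_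
  have : IsClosed ((fun n : ↥N => x * (n : G)) ⁻¹' T) :=
    hT.preimage ((continuous_mul_left x).comp continuous_subtype_val)
  exact this.measurableSet

end Fiber

section Meas

variable {G : Type*} [Group G] [TopologicalSpace G] [IsTopologicalGroup G]
  [LocallyCompactSpace G] [T2Space G]
  (N : Subgroup G) [N.Normal] (hN : IsClosed (N : Set G))
  [MeasurableSpace ↥N] [BorelSpace ↥N] (μN' : Measure ↥N)
  [μN'.IsMulLeftInvariant] [μN'.Regular]
  [MeasurableSpace (G ⧸ N)] [BorelSpace (G ⧸ N)]

include hN in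
lemma psi_measurable {K : Set G} (hK : IsCompact K) :
    Measurable (psi N μN' K) := by
  apply measurable_of_Iio
  intro a
  suffices h : IsOpen (psi N μN' K ⁻¹' Set.Iio a) from h.measurableSet
  rw [← (QuotientGroup.isQuotientMap_mk N).isOpen_preimage]
  have hpre : (QuotientGroup.mk : G → G ⧸ N) ⁻¹' (psi N μN' K ⁻¹' Set.Iio a)
      = {x : G | psic N μN' K x < a} := rfl
  rw [hpre, isOpen_iff_mem_nhds]
  intro x₀ hx₀
  have hx₀' : μN' ((fun n : ↥N => x₀ * (n : G)) ⁻¹' K) < a := hx₀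
  -- the compact preimage in the subgroup
  set C : Set G := (fun g : G => x₀ * g) ⁻¹' K with hC
  have hCcomp : IsCompact C := (Homeomorph.mulLeft x₀).isCompact_preimage.2 hK
  have hAeq : (fun n : ↥N => x₀ * (n : G)) ⁻¹' K = (Subtype.val : ↥N → G) ⁻¹' C := rfl
  -- outer regularity gives an open superset of small measure
  obtain ⟨W, hWA, hWopen, hWlt⟩ :=
    Set.exists_isOpen_lt_of_lt ((fun n : ↥N => x₀ * (n : G)) ⁻¹' K) a hx₀'
  obtain ⟨Wg, hWgopen, hWgpre⟩ := isOpen_induced_iff.1 hWopen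
  -- separate the compact set `C` from the open set `Wg ∪ Nᶜ`
  have hCsub : C ⊆ Wg ∪ (↑N : Set G)ᶜ := by
    intro c hc
    by_cases hcN : c ∈ (N : Set G)
    · left
      have hmem : (⟨c, hcN⟩ : ↥N) ∈ (fun n : ↥N => x₀ * (n : G)) ⁻¹' K := hc
      have := hWA hmem
      rw [← hWgpre] at this
      exact this
    · exact Or.inr hcN
  obtain ⟨V, hV, hVC⟩ := compact_open_separated_mul_left hCcomp
    (hWgopen.union (isOpen_compl_iff.2 hN)) hCsub
  have hcont : ContinuousAt (fun x : G => x⁻¹ * x₀) x₀ :=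
    ((continuous_inv.mul continuous_const)).continuousAt
  have hmem : {x : G | x⁻¹ * x₀ ∈ V} ∈ 𝓝 x₀ := hcont.preimage_mem_nhds (by simpa using hV)
  refine Filter.mem_of_superset hmem ?_
  intro x hx
  show psic N μN' K x < a
  have hsub2 : (fun n : ↥N => x * (n : G)) ⁻¹' K ⊆ (Subtype.val : ↥N → G) ⁻¹' Wg := by
    intro n hn
    have hc : x₀⁻¹ * (x * (n : G)) ∈ C := by
      show x₀ * (x₀⁻¹ * (x * (n : G))) ∈ K
      rw [mul_inv_cancel_left]
      exact hn
    have hprod : (x⁻¹ * x₀) * (x₀⁻¹ * (x * (n : G))) ∈ V * C := Set.mul_mem_mul hx hc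
    have heq : (x⁻¹ * x₀) * (x₀⁻¹ * (x * (n : G))) = (n : G) := by group
    rw [heq] at hprod
    rcases hVC hprod with h | h
    · exact h
    · exact absurd n.2 h
  calc μN' ((fun n : ↥N => x * (n : G)) ⁻¹' K) ≤ μN' ((Subtype.val : ↥N → G) ⁻¹' Wg) :=
        measure_mono hsub2
    _ = μN' W := by rw [hWgpre]
    _ < a := hWlt


include hN in
lemma psi_le_indicator {K : Set G} (hK : IsCompact K) (q : G ⧸ N) :
    psi N μN' K q ≤ Set.indicator ((QuotientGroup.mk : G → G ⧸ N) '' K)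
      (fun _ => μN' ((Subtype.val : ↥N → G) ⁻¹' (K⁻¹ * K))) q := by
  refine QuotientGroup.induction_on q fun x => ?_
  by_cases hq : (QuotientGroup.mk x : G ⧸ N) ∈ (QuotientGroup.mk : G → G ⧸ N) '' K
  · rw [Set.indicator_of_mem hq]
    obtain ⟨k, hkK, hk⟩ := hq
    have hxk : psi N μN' K (QuotientGroup.mk x) = psic N μN' K k := by
      rw [← hk, psi_mk]
    rw [hxk]
    refine measure_mono ?_
    intro n hn
    have hn' : k * (n : G) ∈ K := hn
    show (n : G) ∈ K⁻¹ * K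
    have : (n : G) = k⁻¹ * (k * (n : G)) := by group
    rw [this]
    exact Set.mul_mem_mul (Set.inv_mem_inv.2 hkK) hn'
  · rw [Set.indicator_of_notMem hq, psi_mk]
    have hempty : (fun n : ↥N => x * (n : G)) ⁻¹' K = ∅ := by
      ext n
      simp only [Set.mem_preimage, Set.mem_empty_iff_false, iff_false]
      intro hn
      exact hq ⟨x * (n : G), hn, QuotientGroup.mk_mul_of_mem x n.2⟩
    unfold psic
    rw [hempty]
    simp

variable (ν : Measure (G ⧸ N)) [IsFiniteMeasureOnCompacts ν] [IsFiniteMeasureOnCompacts μN']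
  [T2Space (G ⧸ N)]

include hN in
lemma lintegral_psi_ne_top {K : Set G} (hK : IsCompact K) :
    ∫⁻ q, psi N μN' K q ∂ν ≠ ∞ := by
  have hKQ : IsCompact ((QuotientGroup.mk : G → G ⧸ N) '' K) :=
    hK.image (QuotientGroup.continuous_mk)
  have hne : ∫⁻ q, psi N μN' K q ∂ν ≤
      μN' ((Subtype.val : ↥N → G) ⁻¹' (K⁻¹ * K)) * ν ((QuotientGroup.mk : G → G ⧸ N) '' K) := by
    calc ∫⁻ q, psi N μN' K q ∂ν
        ≤ ∫⁻ q, Set.indicator ((QuotientGroup.mk : G → G ⧸ N) '' K)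
            (fun _ => μN' ((Subtype.val : ↥N → G) ⁻¹' (K⁻¹ * K))) q ∂ν :=
          lintegral_mono fun q => psi_le_indicator N hN μN' (K := K) hK q
      _ = μN' ((Subtype.val : ↥N → G) ⁻¹' (K⁻¹ * K)) * ν ((QuotientGroup.mk : G → G ⧸ N) '' K) := by
          rw [lintegral_indicator_const hKQ.isClosed.measurableSet]
  refine (lt_of_le_of_lt hne ?_).ne
  have h1 : μN' ((Subtype.val : ↥N → G) ⁻¹' (K⁻¹ * K)) < ∞ := by
    have hcomp : IsCompact ((Subtype.val : ↥N → G) ⁻¹' (K⁻¹ * K)) :=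
      hN.isClosedEmbedding_subtypeVal.isCompact_preimage (hK.inv.mul hK)
    exact hcomp.measure_lt_top
  exact ENNReal.mul_lt_top h1 hKQ.measure_lt_top


/-- The content on `G` obtained by integrating fiberwise `μN'`-masses over `ν`. -/
noncomputable def lamCont : Content G where
  toFun K := (∫⁻ q, psi N μN' (K : Set G) q ∂ν).toNNReal
  mono' K₁ K₂ h :=
    ENNReal.toNNReal_mono (lintegral_psi_ne_top N hN μN' ν K₂.isCompact)
      (lintegral_mono fun q => psi_mono N μN' h q)
  sup_disjoint' K₁ K₂ hdisj _h₁ h₂ := by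
    have hpt : ∀ q, psi N μN' (↑(K₁ ⊔ K₂) : Set G) q
        = psi N μN' (K₁ : Set G) q + psi N μN' (K₂ : Set G) q := by
      intro q
      have : ((K₁ ⊔ K₂ : Compacts G) : Set G) = (K₁ : Set G) ∪ (K₂ : Set G) := rfl
      rw [this, psi_union_disjoint N μN' hdisj h₂ q]
    have heq : ∫⁻ q, psi N μN' (↑(K₁ ⊔ K₂) : Set G) q ∂ν
        = ∫⁻ q, psi N μN' (K₁ : Set G) q ∂ν + ∫⁻ q, psi N μN' (K₂ : Set G) q ∂ν := by
      rw [lintegral_congr hpt]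
      exact lintegral_add_left (psi_measurable N hN μN' K₁.isCompact) _
    have h2 := congrArg ENNReal.toNNReal heq
    rw [ENNReal.toNNReal_add (lintegral_psi_ne_top N hN μN' ν K₁.isCompact)
      (lintegral_psi_ne_top N hN μN' ν K₂.isCompact)] at h2
    exact h2
  sup_le' K₁ K₂ := by
    have hle : ∫⁻ q, psi N μN' (↑(K₁ ⊔ K₂) : Set G) q ∂ν
        ≤ ∫⁻ q, psi N μN' (K₁ : Set G) q ∂ν + ∫⁻ q, psi N μN' (K₂ : Set G) q ∂ν := by
      have h1 : ∫⁻ q, psi N μN' (↑(K₁ ⊔ K₂) : Set G) q ∂ν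
          ≤ ∫⁻ q, (psi N μN' (K₁ : Set G) q + psi N μN' (K₂ : Set G) q) ∂ν :=
        lintegral_mono fun q => psi_union_le N μN' _ _ q
      rwa [lintegral_add_left (psi_measurable N hN μN' K₁.isCompact)] at h1
    have hfin : ∫⁻ q, psi N μN' (K₁ : Set G) q ∂ν + ∫⁻ q, psi N μN' (K₂ : Set G) q ∂ν ≠ ∞ :=
      ENNReal.add_ne_top.2 ⟨lintegral_psi_ne_top N hN μN' ν K₁.isCompact,
        lintegral_psi_ne_top N hN μN' ν K₂.isCompact⟩
    calc (∫⁻ q, psi N μN' (↑(K₁ ⊔ K₂) : Set G) q ∂ν).toNNReal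
        ≤ (∫⁻ q, psi N μN' (K₁ : Set G) q ∂ν + ∫⁻ q, psi N μN' (K₂ : Set G) q ∂ν).toNNReal :=
          ENNReal.toNNReal_mono hfin hle
      _ = _ := ENNReal.toNNReal_add (lintegral_psi_ne_top N hN μN' ν K₁.isCompact)
          (lintegral_psi_ne_top N hN μN' ν K₂.isCompact)

lemma lamCont_apply (K : Compacts G) :
    (lamCont N hN μN' ν K : ℝ≥0∞) = ∫⁻ q, psi N μN' (K : Set G) q ∂ν := by
  exact ENNReal.coe_toNNReal (lintegral_psi_ne_top N hN μN' ν K.isCompact)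


include hN in
lemma lamCont_mul_left [ν.IsMulLeftInvariant] (g : G) (K : Compacts G) :
    (lamCont N hN μN' ν (K.map (fun x => g * x) (continuous_mul_left g)) : ℝ≥0∞)
      = lamCont N hN μN' ν K := by
  rw [lamCont_apply, lamCont_apply]
  have hpt : ∀ q : G ⧸ N, psi N μN' ((K.map (fun x => g * x) (continuous_mul_left g) : Compacts G)
      : Set G) q = psi N μN' (K : Set G) (((QuotientGroup.mk g : G ⧸ N))⁻¹ * q) := by
    intro q
    refine QuotientGroup.induction_on q fun x => ?_
    have hq : ((QuotientGroup.mk g : G ⧸ N))⁻¹ * (QuotientGroup.mk x : G ⧸ N)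
        = (QuotientGroup.mk (g⁻¹ * x) : G ⧸ N) := by
      rw [QuotientGroup.mk_mul, QuotientGroup.mk_inv]
    rw [hq, psi_mk, psi_mk]
    unfold psic
    congr 1
    ext n
    simp only [Set.mem_preimage, Compacts.coe_map, Set.mem_image]
    constructor
    · rintro ⟨y, hy, hxy⟩
      have hyy : y = g⁻¹ * (x * (n : G)) := eq_inv_mul_iff_mul_eq.2 hxy
      rw [mul_assoc, ← hyy]
      exact hy
    · intro hy
      exact ⟨g⁻¹ * x * (n : G), hy, by group⟩
  rw [lintegral_congr hpt]
  have hmeas : Measurable (psi N μN' (K : Set G)) := psi_measurable N hN μN' K.isCompact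
  have hmap := lintegral_map (μ := ν) hmeas
    (measurable_const_mul ((QuotientGroup.mk g : G ⧸ N))⁻¹)
  rw [← hmap, map_mul_left_eq_self]

include hN in
lemma lamCont_mul_right (m₀ : ↥N) (r : ℝ≥0∞)
    (hsc : μN'.map (fun n => n * m₀) = r • μN') (K : Compacts G) :
    (lamCont N hN μN' ν (K.map (fun x => x * ((m₀ : G))⁻¹)
      (continuous_mul_right _)) : ℝ≥0∞) = r * lamCont N hN μN' ν K := by
  rw [lamCont_apply, lamCont_apply]
  have hpt : ∀ q : G ⧸ N, psi N μN' ((K.map (fun x => x * ((m₀ : G))⁻¹)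
      (continuous_mul_right _) : Compacts G) : Set G) q = r * psi N μN' (K : Set G) q := by
    intro q
    refine QuotientGroup.induction_on q fun x => ?_
    rw [psi_mk, psi_mk]
    unfold psic
    have hset : (fun n : ↥N => x * (n : G)) ⁻¹' ((K.map (fun x => x * ((m₀ : G))⁻¹)
        (continuous_mul_right _) : Compacts G) : Set G)
        = (fun n : ↥N => n * m₀) ⁻¹' ((fun n : ↥N => x * (n : G)) ⁻¹' (K : Set G)) := by
      ext n
      simp only [Set.mem_preimage, Compacts.coe_map, Set.mem_image, Subgroup.coe_mul]
      constructor
      · rintro ⟨y, hy, hxy⟩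
        have hyy : y = x * (n : G) * (m₀ : G) := mul_inv_eq_iff_eq_mul.1 hxy
        rw [← mul_assoc, ← hyy]
        exact hy
      · intro hy
        refine ⟨x * (n : G) * (m₀ : G), ?_, by group⟩
        rwa [mul_assoc]
    rw [hset]
    have hAmeas : MeasurableSet ((fun n : ↥N => x * (n : G)) ⁻¹' (K : Set G)) := by
      have : IsClosed ((fun n : ↥N => x * (n : G)) ⁻¹' (K : Set G)) :=
        K.isCompact.isClosed.preimage ((continuous_mul_left x).comp continuous_subtype_val)
      exact this.measurableSet
    have := Measure.map_apply (μ := μN') (measurable_mul_const m₀) hAmeas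
    rw [← this, hsc, Measure.smul_apply, smul_eq_mul]
  rw [lintegral_congr hpt]
  exact lintegral_const_mul r (psi_measurable N hN μN' K.isCompact)

end Meas


/-- If a content gets scaled by a factor `r` under images by `φ.symm`, then the associated
measure satisfies `map φ μ = r • μ`. -/
lemma content_map_smul {X : Type*} [TopologicalSpace X] [T2Space X]
    [MeasurableSpace X] [BorelSpace X]
    (lam : Content X) (φ : X ≃ₜ X) (r : ℝ≥0∞) (hr0 : r ≠ 0) (hrT : r ≠ ∞)
    (h : ∀ K : Compacts X, (lam (K.map φ.symm φ.symm.continuous) : ℝ≥0∞) = r * lam K) :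
    lam.measure.map φ = r • lam.measure := by
  have key : ∀ (U : Set X) (hU : IsOpen U),
      lam.innerContent ⟨φ ⁻¹' U, hU.preimage φ.continuous⟩ = r * lam.innerContent ⟨U, hU⟩ := by
    intro U hU
    rw [Content.innerContent, Content.innerContent, ENNReal.mul_iSup]
    simp only [ENNReal.mul_iSup]
    apply le_antisymm
    · refine iSup₂_le fun K hK => ?_
      have hKmap : ((K.map φ φ.continuous : Compacts X) : Set X) ⊆ U := by
        rw [Compacts.coe_map]; exact Set.image_subset_iff.2 hK
      have hKid : (K.map φ φ.continuous).map φ.symm φ.symm.continuous = K := by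
        apply Compacts.ext
        simp [Compacts.coe_map, Set.image_image]
      have heq : (lam K : ℝ≥0∞) = r * lam (K.map φ φ.continuous) := by
        rw [← h (K.map φ φ.continuous), hKid]
      exact le_of_eq_of_le heq (le_iSup₂_of_le (K.map φ φ.continuous) hKmap le_rfl)
    · refine iSup₂_le fun K hK => ?_
      have hsub : ((K.map φ.symm φ.symm.continuous : Compacts X) : Set X) ⊆ φ ⁻¹' U := by
        rw [Compacts.coe_map]
        rintro x ⟨y, hy, rfl⟩
        simpa using hK hy
      exact le_of_eq_of_le (h K).symm
        (le_iSup₂_of_le (K.map φ.symm φ.symm.continuous) hsub le_rfl)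
  ext A hA
  rw [Measure.map_apply φ.continuous.measurable hA, Measure.smul_apply, smul_eq_mul,
    lam.measure_apply hA, lam.measure_apply (φ.continuous.measurable hA),
    Content.outerMeasure_eq_iInf, Content.outerMeasure_eq_iInf]
  rw [ENNReal.mul_iInf_of_ne hr0 hrT]
  simp only [ENNReal.mul_iInf_of_ne hr0 hrT]
  apply le_antisymm
  · refine le_iInf fun V => le_iInf fun hV => le_iInf fun hAV => ?_
    refine iInf_le_of_le (φ ⁻¹' V) (iInf_le_of_le (hV.preimage φ.continuous)
      (iInf_le_of_le (Set.preimage_mono hAV) ?_))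
    exact le_of_eq (key V hV)
  · refine le_iInf fun U => le_iInf fun hU => le_iInf fun hAU => ?_
    have hV : IsOpen (φ.symm ⁻¹' U) := hU.preimage φ.symm.continuous
    have hAV : A ⊆ φ.symm ⁻¹' U := by
      intro a ha
      have : φ.symm a ∈ φ ⁻¹' A := by
        simp only [Set.mem_preimage, Homeomorph.apply_symm_apply]; exact ha
      exact hAU this
    refine iInf_le_of_le (φ.symm ⁻¹' U) (iInf_le_of_le hV (iInf_le_of_le hAV ?_))
    rw [← key (φ.symm ⁻¹' U) hV]
    refine lam.innerContent_mono' _ hU ?_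
    intro x hx
    simpa using hx



/-- On a locally compact regular space with a measure positive on opens and finite on
compacts, there is a nonnegative compactly supported continuous function with positive
integral. -/
lemma exists_pos_integral_test {X : Type*} [TopologicalSpace X] [RegularSpace X]
    [LocallyCompactSpace X] [MeasurableSpace X] [BorelSpace X] (μ : Measure X)
    [μ.IsOpenPosMeasure] [IsFiniteMeasureOnCompacts μ] (x₀ : X) :
    ∃ f : X → ℝ, Continuous f ∧ HasCompactSupport f ∧ 0 ≤ f ∧ 0 < ∫ x, f x ∂μ := by
  obtain ⟨f, hfc, hfnn, hfx⟩ := exists_continuous_nonneg_pos x₀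
  refine ⟨f, f.continuous, hfc, hfnn, ?_⟩
  rw [integral_pos_iff_support_of_nonneg hfnn (f.continuous.integrable_of_hasCompactSupport hfc)]
  have hopen : IsOpen (Function.support f) := f.continuous.isOpen_support
  exact hopen.measure_pos μ ⟨x₀, hfx⟩

/-- Transfer the right-translation scaling property of one Haar measure to any regular
Haar measure on the same group. -/
lemma map_mul_right_of_scaling {H : Type*} [Group H] [TopologicalSpace H]
    [IsTopologicalGroup H] [LocallyCompactSpace H] [T2Space H] [MeasurableSpace H]
    [BorelSpace H] (μ μ' : Measure H) [μ.IsHaarMeasure] [μ'.IsHaarMeasure] [μ'.Regular]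
    (Δ : H → ℝ) (hpos : ∀ t, 0 < Δ t)
    (hΔ : ∀ t : H, μ.map (fun x => x * t) = ENNReal.ofReal (Δ t)⁻¹ • μ) (t : H) :
    μ'.map (fun x => x * t) = ENNReal.ofReal (Δ t)⁻¹ • μ' := by
  set m : Measure H := μ'.map (fun x => x * t) with hm
  haveI : m.IsMulLeftInvariant := by
    rw [hm]; infer_instance
  haveI : m.Regular := by
    have : m = μ'.map (Homeomorph.mulRight t) := rfl
    rw [this]; exact Measure.Regular.map (Homeomorph.mulRight t)
  haveI : IsFiniteMeasureOnCompacts m := by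
    constructor
    intro K hK
    rw [hm, Measure.map_apply (measurable_mul_const t) hK.measurableSet]
    exact (((Homeomorph.mulRight t).isCompact_preimage).2 hK).measure_lt_top
  have huniq : m = m.haarScalarFactor μ' • μ' :=
    Measure.isMulLeftInvariant_eq_smul_of_regular m μ'
  -- test function
  obtain ⟨f, hfcont, hfcomp, hfnn, hfpos⟩ := exists_pos_integral_test μ' (1 : H)
  -- compare integrals of f against m using the given Haar measure μ
  have c2 : ∀ (g : H → ℝ), Continuous g → HasCompactSupport g →
      ∫ x, g x ∂μ = (μ.haarScalarFactor μ' : ℝ) * ∫ x, g x ∂μ' := by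
    intro g hg hgs
    have := Measure.integral_isMulLeftInvariant_eq_smul_of_hasCompactSupport μ μ' hg hgs
    rwa [integral_smul_nnreal_measure, NNReal.smul_def, smul_eq_mul] at this
  have c2pos : (0:ℝ) < (μ.haarScalarFactor μ' : ℝ) :=
    NNReal.coe_pos.2 (Measure.haarScalarFactor_pos_of_isHaarMeasure μ μ')
  -- the translated test function
  have htrcont : Continuous fun x : H => f (x * t) := hfcont.comp (continuous_mul_right t)
  have htrcomp : HasCompactSupport fun x : H => f (x * t) :=
    hfcomp.comp_homeomorph (Homeomorph.mulRight t)
  -- ∫ f(x t) dμ = (Δ t)⁻¹ ∫ f dμ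
  have hμtr : ∫ x, f (x * t) ∂μ = (Δ t)⁻¹ * ∫ x, f x ∂μ := by
    have h1 : ∫ x, f (x * t) ∂μ = ∫ y, f y ∂(μ.map (fun x => x * t)) :=
      (integral_map (measurable_mul_const t).aemeasurable
        hfcont.aestronglyMeasurable).symm
    rw [h1, hΔ t, integral_smul_measure, ENNReal.toReal_ofReal (inv_pos.2 (hpos t)).le,
      smul_eq_mul]
  -- hence the same for μ'
  have hμ'tr : ∫ x, f (x * t) ∂μ' = (Δ t)⁻¹ * ∫ x, f x ∂μ' := by
    have e1 := c2 (fun x => f (x * t)) htrcont htrcomp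
    have e2 := c2 f hfcont hfcomp
    rw [hμtr, e2] at e1
    have := e1
    nlinarith [this]
  -- identify the scalar
  have hmint : ∫ x, f x ∂m = (Δ t)⁻¹ * ∫ x, f x ∂μ' := by
    rw [hm, integral_map (measurable_mul_const t).aemeasurable hfcont.aestronglyMeasurable]
    exact hμ'tr
  have hmint' : ∫ x, f x ∂m = (m.haarScalarFactor μ' : ℝ) * ∫ x, f x ∂μ' := by
    have := Measure.integral_isMulLeftInvariant_eq_smul_of_hasCompactSupport m μ' hfcont hfcomp
    rwa [integral_smul_nnreal_measure, NNReal.smul_def, smul_eq_mul] at this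
  have hsc : (m.haarScalarFactor μ' : ℝ) = (Δ t)⁻¹ := by
    have hcomb : (m.haarScalarFactor μ' : ℝ) * ∫ x, f x ∂μ' = (Δ t)⁻¹ * ∫ x, f x ∂μ' :=
      hmint'.symm.trans hmint
    exact mul_right_cancel₀ (ne_of_gt hfpos) hcomb
  have hofr : ENNReal.ofReal (Δ t)⁻¹ = ((m.haarScalarFactor μ' : ℝ≥0) : ℝ≥0∞) := by
    rw [← hsc, ENNReal.ofReal_coe_nnreal]
  rw [huniq, hofr, ENNReal.smul_def]

end ModularRestrictAux

open ModularRestrictAux in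
/-- For a closed normal subgroup `N` of a locally compact group `G`, the
modular function of `G` restricted to `N` equals the modular function of `N`:
`Δ_G(n) = Δ_N(n)` for all `n ∈ N`.  The modular functions are characterized by the
scaling of left Haar measure under right translation. -/
theorem modular_function_restricts_to_normal_subgroup
    {G : Type*} [Group G] [TopologicalSpace G] [IsTopologicalGroup G]
    [LocallyCompactSpace G] [T2Space G] [MeasurableSpace G] [BorelSpace G]
    (N : Subgroup G) [N.Normal] (hN : IsClosed (N : Set G))
    -- left Haar measures on G and on N
    (μG : Measure G) [μG.IsHaarMeasure]
    [MeasurableSpace ↥N] [BorelSpace ↥N]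
    (μN : Measure ↥N) [μN.IsHaarMeasure]
    -- the modular functions of G and N
    (ΔG : G → ℝ) (hΔG_pos : ∀ s, 0 < ΔG s)
    (hΔG : ∀ t : G, μG.map (fun x => x * t) = ENNReal.ofReal (ΔG t)⁻¹ • μG)
    (ΔN : ↥N → ℝ) (hΔN_pos : ∀ t, 0 < ΔN t)
    (hΔN : ∀ t : ↥N, μN.map (fun x => x * t) = ENNReal.ofReal (ΔN t)⁻¹ • μN) :
    ∀ n : ↥N, ΔG (n : G) = ΔN n := by
  intro n₀
  classical
  haveI : LocallyCompactSpace ↥N := hN.locallyCompactSpace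
  -- a regular Haar measure on `N`
  obtain ⟨K₀N⟩ : Nonempty (PositiveCompacts ↥N) := inferInstance
  set μN' : Measure ↥N := Measure.haarMeasure K₀N with hμN'def
  haveI : μN'.IsHaarMeasure := Measure.isHaarMeasure_haarMeasure K₀N
  haveI : μN'.Regular := Measure.regular_haarMeasure
  have hstarN : μN'.map (fun n => n * n₀) = ENNReal.ofReal ((ΔN n₀)⁻¹) • μN' :=
    map_mul_right_of_scaling μN μN' ΔN hΔN_pos hΔN n₀
  -- the quotient group and a Haar measure on it
  haveI : T3Space (G ⧸ N) := @QuotientGroup.instT3Space G _ _ _ N _ hN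
  letI : MeasurableSpace (G ⧸ N) := borel (G ⧸ N)
  haveI : BorelSpace (G ⧸ N) := ⟨rfl⟩
  obtain ⟨K₀Q⟩ : Nonempty (PositiveCompacts (G ⧸ N)) := inferInstance
  set ν : Measure (G ⧸ N) := Measure.haarMeasure K₀Q with hνdef
  haveI : ν.IsHaarMeasure := Measure.isHaarMeasure_haarMeasure K₀Q
  -- the content on `G` built from `μN'` and `ν`, and its measure
  set lam : Content G := lamCont N hN μN' ν with hlam
  set M : Measure G := lam.measure with hM
  -- `M` is left invariant
  haveI hMinv : M.IsMulLeftInvariant := by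
    refine ⟨fun g => ?_⟩
    have h := content_map_smul lam (Homeomorph.mulLeft g) 1 one_ne_zero ENNReal.one_ne_top ?_
    · simpa using h
    · intro K
      rw [one_mul]
      have h2 : (Homeomorph.mulLeft g).symm = Homeomorph.mulLeft g⁻¹ := by
        ext x
        rfl
      rw [h2]
      exact lamCont_mul_left N hN μN' ν g⁻¹ K
  -- the key scaling property of `M` under right translation by `n₀`
  have hkey : M.map (fun x => x * ((n₀ : G))) = ENNReal.ofReal ((ΔN n₀)⁻¹) • M := by
    have h := content_map_smul lam (Homeomorph.mulRight (n₀ : G))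
      (ENNReal.ofReal ((ΔN n₀)⁻¹))
      (ENNReal.ofReal_pos.2 (inv_pos.2 (hΔN_pos n₀))).ne' ENNReal.ofReal_ne_top ?_
    · simpa using h
    · intro K
      have h2 : (Homeomorph.mulRight (n₀ : G)).symm = Homeomorph.mulRight ((n₀ : G))⁻¹ := by
        ext x
        rfl
      rw [h2]
      exact lamCont_mul_right N hN μN' ν n₀ _ hstarN K
  -- `M` is a Haar measure
  haveI hMfin : IsFiniteMeasureOnCompacts M := by
    constructor
    intro K hK
    calc M K ≤ M (closure K) := measure_mono subset_closure
      _ = lam.outerMeasure (closure K) := lam.measure_apply isClosed_closure.measurableSet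
      _ < ∞ := lam.outerMeasure_lt_top_of_isCompact hK.closure
  haveI hMopen : M.IsOpenPosMeasure := by
    refine ⟨fun U hU hUne => ?_⟩
    obtain ⟨x₁, hx₁⟩ := hUne
    obtain ⟨Kp, hKpc, hxint, hKpU⟩ := exists_compact_subset hU hx₁
    have hψpos : ∀ q ∈ (QuotientGroup.mk : G → G ⧸ N) '' (interior Kp),
        0 < psi N μN' Kp q := by
      rintro q ⟨y, hy, rfl⟩
      rw [psi_mk]
      have hopen2 : IsOpen ((fun n : ↥N => y * (n : G)) ⁻¹' interior Kp) :=
        isOpen_interior.preimage ((continuous_mul_left y).comp continuous_subtype_val)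
      have hne2 : ((fun n : ↥N => y * (n : G)) ⁻¹' interior Kp).Nonempty :=
        ⟨1, by simpa using hy⟩
      exact lt_of_lt_of_le (hopen2.measure_pos μN' hne2)
        (measure_mono (Set.preimage_mono interior_subset))
    have hpos : 0 < (lam ⟨Kp, hKpc⟩ : ℝ≥0∞) := by
      rw [hlam, lamCont_apply]
      rw [pos_iff_ne_zero]
      intro hz
      have hae := (lintegral_eq_zero_iff (psi_measurable N hN μN' hKpc)).1 hz
      have hOnull : ν ((QuotientGroup.mk : G → G ⧸ N) '' (interior Kp)) = 0 := by
        refine measure_mono_null ?_ (ae_iff.1 hae)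
        intro q hq
        exact (hψpos q hq).ne'
      have hOopen : IsOpen ((QuotientGroup.mk : G → G ⧸ N) '' (interior Kp)) :=
        QuotientGroup.isOpenMap_coe (interior Kp) isOpen_interior
      have hOne : ((QuotientGroup.mk : G → G ⧸ N) '' (interior Kp)).Nonempty :=
        ⟨_, ⟨x₁, hxint, rfl⟩⟩
      exact (hOopen.measure_pos ν hOne).ne' hOnull
    have hchain : (lam ⟨Kp, hKpc⟩ : ℝ≥0∞) ≤ M U := by
      rw [hM, lam.measure_apply hU.measurableSet, lam.outerMeasure_of_isOpen U hU]
      exact lam.le_innerContent ⟨Kp, hKpc⟩ ⟨U, hU⟩ hKpU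
    exact (lt_of_lt_of_le hpos hchain).ne'
  haveI hMhaar : M.IsHaarMeasure := {}
  -- compare `M` with `μG` via the uniqueness of Haar measure
  obtain ⟨f₀, hf₀c, hf₀s, hf₀nn, hf₀pos⟩ := exists_pos_integral_test μG (1 : G)
  have hMint : ∀ f : G → ℝ, Continuous f → HasCompactSupport f →
      ∫ x, f x ∂M = (M.haarScalarFactor μG : ℝ) * ∫ x, f x ∂μG := by
    intro f hc hcs
    have := Measure.integral_isMulLeftInvariant_eq_smul_of_hasCompactSupport M μG hc hcs
    rwa [integral_smul_nnreal_measure, NNReal.smul_def, smul_eq_mul] at this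
  have hgc : Continuous (fun x => f₀ (x * (n₀ : G))) := hf₀c.comp (continuous_mul_right _)
  have hgs : HasCompactSupport (fun x => f₀ (x * (n₀ : G))) :=
    hf₀s.comp_homeomorph (Homeomorph.mulRight (n₀ : G))
  have E1 : ∫ x, f₀ (x * (n₀ : G)) ∂M = (ΔN n₀)⁻¹ * ∫ x, f₀ x ∂M := by
    have h1 : ∫ x, f₀ (x * (n₀ : G)) ∂M = ∫ y, f₀ y ∂(M.map (fun x => x * (n₀ : G))) :=
      (integral_map (measurable_mul_const _).aemeasurable hf₀c.aestronglyMeasurable).symm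
    rw [h1, hkey, integral_smul_measure, ENNReal.toReal_ofReal (inv_pos.2 (hΔN_pos n₀)).le,
      smul_eq_mul]
  have E2 : ∫ x, f₀ (x * (n₀ : G)) ∂μG = (ΔG (n₀ : G))⁻¹ * ∫ x, f₀ x ∂μG := by
    have h1 : ∫ x, f₀ (x * (n₀ : G)) ∂μG = ∫ y, f₀ y ∂(μG.map (fun x => x * (n₀ : G))) :=
      (integral_map (measurable_mul_const _).aemeasurable hf₀c.aestronglyMeasurable).symm
    rw [h1, hΔG (n₀ : G), integral_smul_measure,
      ENNReal.toReal_ofReal (inv_pos.2 (hΔG_pos (n₀ : G))).le, smul_eq_mul]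
  have hc_pos : (0 : ℝ) < (M.haarScalarFactor μG : ℝ) :=
    NNReal.coe_pos.2 (Measure.haarScalarFactor_pos_of_isHaarMeasure M μG)
  have E3 := hMint _ hgc hgs
  rw [E1, E2, hMint f₀ hf₀c hf₀s] at E3
  have E4 : (ΔN n₀)⁻¹ * ((M.haarScalarFactor μG : ℝ) * ∫ x, f₀ x ∂μG)
      = (ΔG (n₀ : G))⁻¹ * ((M.haarScalarFactor μG : ℝ) * ∫ x, f₀ x ∂μG) := by
    rw [E3]; ring
  have E5 : (ΔN n₀)⁻¹ = (ΔG (n₀ : G))⁻¹ :=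
    mul_right_cancel₀ (by positivity) E4
  exact (inv_inj.1 E5).symm
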